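/- arXiv:2010.13499 — 6 statements merged into one kernel-verified Lean document; each statement's English description precedes it below -/
import Mathlib

section
/- For every γ ∈ [0,1] and every ε ≥ 0, there exist α ∈ (0, (√5−1)/2) such that the weighted Hamming similarity configuration 1 − α/(1−α²) exceeds (2α²/(α+2α²))·(1+ε); consequently no weighted Hamming similarity H_γ relatively approximates the Dice score with finite error. Formally: for all ε ≥ 0, there exists α ∈ (0,1) with 1 − α/(1−α²) − (2α/(1+2α))·(1+ε) > 0. -/
theorem weighted_hamming_no_relative_approx :
    ∀ ε : ℝ, 0 ≤ ε →
      ∃ α ∈ Set.Ioo (0:ℝ) 1,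
        1 - α / (1 - α ^ 2) - (2 * α / (1 + 2 * α)) * (1 + ε) > 0 := by
  intro ε hε
  have h1 : (0:ℝ) < 1 + ε := by linarith
  set α : ℝ := 1 / (8 * (1 + ε)) with hα
  have hαpos : 0 < α := by positivity
  have hαle : α ≤ 1 / 8 := by
    rw [hα]
    rw [div_le_div_iff₀ (by positivity) (by norm_num)]
    linarith
  refine ⟨α, ⟨hαpos, by linarith⟩, ?_⟩
  have h2 : (0:ℝ) < 1 - α ^ 2 := by nlinarith
  have h3 : (0:ℝ) < 1 + 2 * α := by linarith
  have hA : α / (1 - α ^ 2) ≤ 2 * α := by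
    rw [div_le_iff₀ h2]; nlinarith
  have hB : (2 * α / (1 + 2 * α)) * (1 + ε) ≤ 2 * α * (1 + ε) := by
    have : 2 * α / (1 + 2 * α) ≤ 2 * α := by
      rw [div_le_iff₀ h3]; nlinarith
    nlinarith
  have hC : α * (1 + ε) = 1 / 8 := by
    rw [hα, div_mul_eq_mul_div, one_mul, div_eq_div_iff (by positivity) (by norm_num)]; ring
  nlinarith
end

section
/- lim_{α→0⁺} [1 − α/(1−α²) − 2α/(1+2α)] = 1; hence the absolute approximation error between the weighted Hamming similarity and the Dice score is 1 (the trivial bound for similarities valued in [0,1]). -/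
theorem weighted_hamming_dice_absolute_error_one :
    Filter.Tendsto (fun α : ℝ => 1 - α / (1 - α ^ 2) - 2 * α / (1 + 2 * α))
      (nhdsWithin 0 (Set.Ioi 0)) (nhds 1) ∧
    IsLUB {e : ℝ | ∃ α ∈ Set.Ioo (0:ℝ) ((Real.sqrt 5 - 1) / 2),
        e = |(1 - α / (1 - α ^ 2)) - 2 * α / (1 + 2 * α)|} 1 := by
  have hs5 : Real.sqrt 5 ^ 2 = 5 := Real.sq_sqrt (by norm_num)
  have hs5n : (0:ℝ) ≤ Real.sqrt 5 := Real.sqrt_nonneg 5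
  have h1lt : (1:ℝ) < Real.sqrt 5 := by nlinarith
  have hφ : (0:ℝ) < (Real.sqrt 5 - 1) / 2 := by linarith
  have hc : ContinuousAt (fun α : ℝ => 1 - α / (1 - α ^ 2) - 2 * α / (1 + 2 * α)) 0 := by
    apply ContinuousAt.sub
    · apply ContinuousAt.sub continuousAt_const
      exact continuousAt_id.div (by fun_prop) (by norm_num)
    · exact (continuousAt_const.mul continuousAt_id).div (by fun_prop) (by norm_num)
  have htend : Filter.Tendsto (fun α : ℝ => 1 - α / (1 - α ^ 2) - 2 * α / (1 + 2 * α))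
      (nhdsWithin 0 (Set.Ioi 0)) (nhds 1) := by
    have := hc.tendsto.mono_left (nhdsWithin_le_nhds (s := Set.Ioi (0:ℝ)))
    simpa using this
  refine ⟨htend, ?_, ?_⟩
  · rintro e ⟨α, ⟨hα0, hαφ⟩, rfl⟩
    have hα1 : α < 1 := by nlinarith
    have hden1 : (0:ℝ) < 1 - α ^ 2 := by nlinarith
    have hden2 : (0:ℝ) < 1 + 2 * α := by linarith
    have hkey : α ^ 2 + α < 1 := by nlinarith
    have hA1 : α / (1 - α ^ 2) ≤ 1 := (div_le_one hden1).mpr (by nlinarith)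
    have hA0 : 0 ≤ α / (1 - α ^ 2) := div_nonneg hα0.le hden1.le
    have hB1 : 2 * α / (1 + 2 * α) ≤ 1 := (div_le_one hden2).mpr (by linarith)
    have hB0 : 0 ≤ 2 * α / (1 + 2 * α) := div_nonneg (by linarith) hden2.le
    rw [abs_le]
    constructor <;> linarith
  · intro b hb
    haveI : (nhdsWithin (0:ℝ) (Set.Ioo 0 ((Real.sqrt 5 - 1) / 2))).NeBot := by
      refine mem_closure_iff_nhdsWithin_neBot.mp ?_
      rw [closure_Ioo hφ.ne]
      exact Set.left_mem_Icc.mpr hφ.le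
    have htend' : Filter.Tendsto
        (fun α : ℝ => |(1 - α / (1 - α ^ 2)) - 2 * α / (1 + 2 * α)|)
        (nhdsWithin 0 (Set.Ioo 0 ((Real.sqrt 5 - 1) / 2))) (nhds 1) := by
      have := (htend.mono_left
        (nhdsWithin_mono 0 (show Set.Ioo (0:ℝ) ((Real.sqrt 5 - 1) / 2) ⊆ Set.Ioi 0 from Set.Ioo_subset_Ioi_self))).abs
      simpa using this
    refine le_of_tendsto htend' ?_
    refine eventually_nhdsWithin_of_forall ?_
    intro α hα
    exact hb ⟨α, hα, rfl⟩
end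

section
/- For α > 0 and b ∈ [0,1], the function g(b) = |b/(b+α(1−b)) − b/(b+(1−b)/2)| attains its maximum over [0,1] at b = (α − √(2α))/(α − 2) (for α ≠ 2), and the maximum value is |(√(2α)−1)/(√(2α)+1)|. -/
theorem tversky_dice_gap_max (α : ℝ) (hα : 0 < α) (hα2 : α ≠ 2) :
    let g : ℝ → ℝ := fun b => |b / (b + α * (1 - b)) - b / (b + (1 - b) / 2)|
    let bmax : ℝ := (α - Real.sqrt (2 * α)) / (α - 2)
    bmax ∈ Set.Icc (0:ℝ) 1 ∧ (∀ b ∈ Set.Icc (0:ℝ) 1, g b ≤ g bmax) ∧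
      g bmax = |(Real.sqrt (2 * α) - 1) / (Real.sqrt (2 * α) + 1)| := by
  intro g bmax
  set s : ℝ := Real.sqrt (2 * α) with hs_def
  have hs_sq : s * s = 2 * α := Real.mul_self_sqrt (by linarith)
  have hs_pos : 0 < s := Real.sqrt_pos.mpr (by linarith)
  have hs2 : s ≠ 2 := by
    intro h
    apply hα2
    nlinarith [hs_sq]
  have hα_eq : α = s * s / 2 := by linarith
  have hα2' : α - 2 ≠ 0 := sub_ne_zero.mpr hα2
  have hs2' : s + 2 ≠ 0 := by linarith
  have hs1 : (0:ℝ) < 1 + s := by linarith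
  -- bmax = s / (s + 2)
  have hbmax : bmax = s / (s + 2) := by
    show (α - s) / (α - 2) = s / (s + 2)
    rw [div_eq_div_iff hα2' hs2']
    nlinarith [hs_sq]
  -- value of g at bmax
  have e1 : s/(s+2) + α*(1 - s/(s+2)) = s*(1+s)/(s+2) := by
    rw [hα_eq]; field_simp; ring
  have e2 : s/(s+2) + (1 - s/(s+2))/2 = (1+s)/(s+2) := by
    field_simp; ring
  have hval : g bmax = |(s - 1) / (s + 1)| := by
    show |bmax / (bmax + α * (1 - bmax)) - bmax / (bmax + (1 - bmax) / 2)| = _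
    rw [hbmax, e1, e2]
    have key : s/(s+2) / (s*(1+s)/(s+2)) - s/(s+2) / ((1+s)/(s+2)) = (1-s)/(1+s) := by
      field_simp
    rw [key, show (1-s)/(1+s) = -((s-1)/(s+1)) by ring_nf, abs_neg]
  refine ⟨?_, ?_, hval⟩
  · rw [hbmax]
    constructor
    · positivity
    · rw [div_le_one (by linarith)]; linarith
  · intro b hb
    obtain ⟨hb0, hb1⟩ := hb
    rw [hval]
    have hD1 : 0 < b + α * (1 - b) := by
      rcases eq_or_lt_of_le hb0 with h | h
      · rw [← h]; simpa using hα
      · nlinarith [mul_nonneg hα.le (by linarith : (0:ℝ) ≤ 1 - b)]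
    have hD2 : 0 < b + (1 - b) / 2 := by linarith
    have hE : 0 < (b + α * (1 - b)) * (b + (1 - b) / 2) := mul_pos hD1 hD2
    have hdiff : b / (b + α * (1 - b)) - b / (b + (1 - b) / 2)
        = (b * (1 - b) * ((1 - 2 * α) / 2)) / ((b + α * (1 - b)) * (b + (1 - b) / 2)) := by
      rw [div_sub_div _ _ hD1.ne' hD2.ne']
      congr 1
      ring
    show |b / (b + α * (1 - b)) - b / (b + (1 - b) / 2)| ≤ |(s - 1) / (s + 1)|
    rw [hdiff, abs_div, abs_of_pos hE, abs_div, abs_of_pos (by linarith : (0:ℝ) < s + 1)]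
    rw [div_le_div_iff₀ hE (by linarith : (0:ℝ) < s + 1)]
    have hNabs : |b * (1 - b) * ((1 - 2 * α) / 2)| = b * (1 - b) * (|s - 1| * (s + 1) / 2) := by
      rw [abs_mul, abs_mul, abs_of_nonneg hb0, abs_of_nonneg (by linarith : (0:ℝ) ≤ 1 - b)]
      rw [show (1 - 2 * α) / 2 = (1 - s) * (1 + s) / 2 by nlinarith [hs_sq], abs_div,
        abs_mul, abs_of_pos hs1, abs_sub_comm, abs_two]
      ring
    rw [hNabs, hα_eq]
    nlinarith [mul_nonneg (abs_nonneg (s - 1)) (sq_nonneg (s * (1 - b) - 2 * b)),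
      abs_nonneg (s - 1), sq_nonneg (s * (1 - b) - 2 * b)]
end

section
/- For α, β > 0, the absolute approximation error sup_{a,b,c ≥ 0, a+b+c=1} |b/(b+αa+βc) − b/(b+0.5a+0.5c)| equals max(|(√(2α)−1)/(√(2α)+1)|, |(√(2β)−1)/(√(2β)+1)|). -/
private lemma g_mono (t1 t2 : ℝ) (h1 : 0 ≤ t1) (h : t1 ≤ t2) :
    (t1 - 1) / (t1 + 1) ≤ (t2 - 1) / (t2 + 1) := by
  rw [div_le_div_iff₀ (by linarith) (by linarith)]
  nlinarith

private lemma abs_g_le (t lo hi : ℝ) (h0 : 0 ≤ lo) (h1 : lo ≤ t) (h2 : t ≤ hi) :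
    |(t - 1) / (t + 1)| ≤ max (|(lo - 1) / (lo + 1)|) (|(hi - 1) / (hi + 1)|) := by
  have hlo := g_mono lo t h0 h1
  have hhi := g_mono t hi (le_trans h0 h1) h2
  rw [abs_le]
  constructor
  · have := neg_abs_le ((lo - 1) / (lo + 1))
    have := le_max_left (|(lo - 1) / (lo + 1)|) (|(hi - 1) / (hi + 1)|)
    linarith
  · have := le_abs_self ((hi - 1) / (hi + 1))
    have := le_max_right (|(lo - 1) / (lo + 1)|) (|(hi - 1) / (hi + 1)|)
    linarith

private lemma phi_le (γ lo hi : ℝ) (h0 : 0 ≤ lo) (h1 : lo ≤ γ) (h2 : γ ≤ hi) :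
    |(Real.sqrt (2 * γ) - 1) / (Real.sqrt (2 * γ) + 1)| ≤
      max (|(Real.sqrt (2 * lo) - 1) / (Real.sqrt (2 * lo) + 1)|)
          (|(Real.sqrt (2 * hi) - 1) / (Real.sqrt (2 * hi) + 1)|) := by
  apply abs_g_le
  · exact Real.sqrt_nonneg _
  · exact Real.sqrt_le_sqrt (by linarith)
  · exact Real.sqrt_le_sqrt (by linarith)

private lemma key (γ b s : ℝ) (hγ : 0 < γ) (hb : 0 ≤ b) (hs : 0 < s) (hbs : b + s = 1) :
    |b / (b + γ * s) - b / (b + 0.5 * s)| ≤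
      |(Real.sqrt (2 * γ) - 1) / (Real.sqrt (2 * γ) + 1)| := by
  set t := Real.sqrt (2 * γ) with ht
  have ht0 : 0 < t := Real.sqrt_pos.2 (by linarith)
  have ht2 : t ^ 2 = 2 * γ := Real.sq_sqrt (by linarith)
  have hD1 : 0 < b + γ * s := by positivity
  have hD2 : 0 < b + 0.5 * s := by positivity
  rw [div_sub_div _ _ hD1.ne' hD2.ne', abs_div, abs_of_pos (by positivity : (0:ℝ) < (b + γ * s) * (b + 0.5 * s)), abs_div, abs_of_pos (by linarith : (0:ℝ) < t + 1), div_le_div_iff₀ (by positivity) (by linarith)]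
  have hnum : b * (b + 0.5 * s) - (b + γ * s) * b = b * s * (0.5 - γ) := by ring
  rw [hnum]
  have hγt : γ = t ^ 2 / 2 := by linarith
  rcases le_or_gt t 1 with h1 | h1
  · have hγ2 : γ ≤ 0.5 := by nlinarith
    rw [abs_of_nonneg (mul_nonneg (mul_nonneg hb hs.le) (by linarith : (0:ℝ) ≤ 0.5 - γ)),
        abs_of_nonpos (by linarith : t - 1 ≤ 0)]
    have hid : -(t - 1) * ((b + γ * s) * (b + 0.5 * s)) - b * s * (0.5 - γ) * (t + 1)
        = (1 - t) * (b - t * s / 2) ^ 2 := by rw [hγt]; ring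
    nlinarith [mul_nonneg (show (0:ℝ) ≤ 1 - t by linarith) (sq_nonneg (b - t * s / 2)), hid]
  · have hγ2 : 0.5 ≤ γ := by nlinarith
    rw [abs_of_nonpos (mul_nonpos_of_nonneg_of_nonpos (mul_nonneg hb hs.le) (by linarith : 0.5 - γ ≤ 0)),
        abs_of_nonneg (by linarith : 0 ≤ t - 1)]
    have hid : (t - 1) * ((b + γ * s) * (b + 0.5 * s)) - -(b * s * (0.5 - γ)) * (t + 1)
        = (t - 1) * (b - t * s / 2) ^ 2 := by rw [hγt]; ring
    nlinarith [mul_nonneg (show (0:ℝ) ≤ t - 1 by linarith) (sq_nonneg (b - t * s / 2)), hid]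

private lemma witness (α β : ℝ) (hα : 0 < α) (hβ : 0 < β) :
    ∃ a b c : ℝ, 0 ≤ a ∧ 0 ≤ b ∧ 0 ≤ c ∧ a + b + c = 1 ∧
      |(Real.sqrt (2 * α) - 1) / (Real.sqrt (2 * α) + 1)| =
        |b / (b + α * a + β * c) - b / (b + 0.5 * a + 0.5 * c)| := by
  set t := Real.sqrt (2 * α) with ht
  have ht0 : 0 < t := Real.sqrt_pos.2 (by linarith)
  have ht2 : t ^ 2 = 2 * α := Real.sq_sqrt (by linarith)
  refine ⟨2 / (t + 2), t / (t + 2), 0, by positivity, by positivity, le_refl 0, ?_, ?_⟩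
  · field_simp
    ring
  · have hD1 : t / (t + 2) + α * (2 / (t + 2)) + β * 0 = t * (1 + t) / (t + 2) := by
      field_simp
      nlinarith
    have hD2 : t / (t + 2) + 0.5 * (2 / (t + 2)) + 0.5 * 0 = (t + 1) / (t + 2) := by
      field_simp
      ring
    rw [hD1, hD2]
    have e1 : t / (t + 2) / (t * (1 + t) / (t + 2)) = 1 / (1 + t) := by
      rw [div_div_div_eq]
      rw [div_eq_div_iff (by positivity) (by positivity)]
      ring
    have e2 : t / (t + 2) / ((t + 1) / (t + 2)) = t / (t + 1) := by
      rw [div_div_div_eq]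
      rw [div_eq_div_iff (by positivity) (by positivity)]
      ring
    rw [e1, e2]
    have : (1 : ℝ) / (1 + t) - t / (t + 1) = -((t - 1) / (t + 1)) := by
      field_simp
      ring
    rw [this, abs_neg]

theorem tversky_dice_absolute_error (α β : ℝ) (hα : 0 < α) (hβ : 0 < β) :
    IsGreatest
      {e : ℝ | ∃ a b c : ℝ, 0 ≤ a ∧ 0 ≤ b ∧ 0 ≤ c ∧ a + b + c = 1 ∧
        e = |b / (b + α * a + β * c) - b / (b + 0.5 * a + 0.5 * c)|}
      (max (|(Real.sqrt (2 * α) - 1) / (Real.sqrt (2 * α) + 1)|)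
           (|(Real.sqrt (2 * β) - 1) / (Real.sqrt (2 * β) + 1)|)) := by
  constructor
  · rcases le_total (|(Real.sqrt (2 * β) - 1) / (Real.sqrt (2 * β) + 1)|)
        (|(Real.sqrt (2 * α) - 1) / (Real.sqrt (2 * α) + 1)|) with h | h
    · rw [max_eq_left h]
      exact witness α β hα hβ
    · rw [max_eq_right h]
      obtain ⟨a, b, c, ha, hb, hc, habc, heq⟩ := witness β α hβ hα
      exact ⟨c, b, a, hc, hb, ha, by linarith, by rw [heq]; try ring_nf⟩
  · rintro e ⟨a, b, c, ha, hb, hc, habc, rfl⟩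
    rcases eq_or_lt_of_le (by positivity : (0:ℝ) ≤ a + c) with hs | hs
    · have ha0 : a = 0 := by linarith
      have hc0 : c = 0 := by linarith
      have hb1 : b = 1 := by linarith
      subst ha0; subst hc0; subst hb1
      simp only [mul_zero, add_zero]
      norm_num
      try positivity
    · -- a + c > 0
      set s := a + c with hsdef
      have hγpos : 0 < α * a + β * c := by
        rcases lt_or_ge 0 a with h | h
        · have : 0 ≤ β * c := by positivity
          nlinarith
        · have ha0 : a = 0 := le_antisymm h ha
          have hc0 : 0 < c := by rw [hsdef] at hs; linarith
          nlinarith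
      set γ := (α * a + β * c) / s with hγdef
      have hγ : 0 < γ := div_pos hγpos hs
      have hrw1 : b + α * a + β * c = b + γ * s := by
        rw [hγdef, div_mul_cancel₀ _ hs.ne']; ring
      have hrw2 : b + 0.5 * a + 0.5 * c = b + 0.5 * s := by
        rw [hsdef]; ring
      rw [hrw1, hrw2]
      have hlo : min α β ≤ γ := by
        rw [hγdef, le_div_iff₀ hs]
        have h1 : min α β ≤ α := min_le_left _ _
        have h2 : min α β ≤ β := min_le_right _ _
        nlinarith
      have hhi : γ ≤ max α β := by
        rw [hγdef, div_le_iff₀ hs]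
        have h1 : α ≤ max α β := le_max_left _ _
        have h2 : β ≤ max α β := le_max_right _ _
        nlinarith
      have hkey := key γ b s hγ hb hs (by rw [hsdef]; linarith)
      have hphi := phi_le γ (min α β) (max α β) (le_of_lt (lt_min hα hβ)) hlo hhi
      have hmax : max (|(Real.sqrt (2 * min α β) - 1) / (Real.sqrt (2 * min α β) + 1)|)
          (|(Real.sqrt (2 * max α β) - 1) / (Real.sqrt (2 * max α β) + 1)|) ≤
          max (|(Real.sqrt (2 * α) - 1) / (Real.sqrt (2 * α) + 1)|)
              (|(Real.sqrt (2 * β) - 1) / (Real.sqrt (2 * β) + 1)|) := by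
        rcases le_total α β with h | h
        · rw [min_eq_left h, max_eq_right h, max_comm]
        · rw [min_eq_right h, max_eq_left h, max_comm]
      linarith
end

section
/- For α, β > 0, max over the sets {(a,b,c) : a,b,c ≥ 0, 0 < a+b+c ≤ 1} of the two ratios (b+0.5a+0.5c)/(b+αa+βc) and (b+αa+βc)/(b+0.5a+0.5c) equals max(2α, 2β, 1/(2α), 1/(2β)); hence the relative approximation error between the Tversky index T_{α,β} and the Dice score is max(2α,2β,0.5/α,0.5/β) − 1. -/
theorem tversky_dice_relative_error (α β : ℝ) (hα : 0 < α) (hβ : 0 < β) :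
    IsGreatest
      {e : ℝ | ∃ a b c : ℝ, 0 ≤ a ∧ 0 ≤ b ∧ 0 ≤ c ∧ 0 < a + b + c ∧ a + b + c ≤ 1 ∧
        (e = (b + 0.5 * a + 0.5 * c) / (b + α * a + β * c) ∨
         e = (b + α * a + β * c) / (b + 0.5 * a + 0.5 * c))}
      (max (max (2 * α) (2 * β)) (max (1 / (2 * α)) (1 / (2 * β)))) := by
  set M := max (max (2 * α) (2 * β)) (max (1 / (2 * α)) (1 / (2 * β))) with hMdef
  have hMa : 2 * α ≤ M := le_max_of_le_left (le_max_left _ _)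
  have hMb : 2 * β ≤ M := le_max_of_le_left (le_max_right _ _)
  have hMia : 1 / (2 * α) ≤ M := le_max_of_le_right (le_max_left _ _)
  have hMib : 1 / (2 * β) ≤ M := le_max_of_le_right (le_max_right _ _)
  have hM1 : 1 ≤ M := by
    rcases le_total 1 (2 * α) with h | h
    · linarith
    · have : 1 ≤ 1 / (2 * α) := by
        rw [le_div_iff₀ (by linarith)]; linarith
      linarith
  have hMα : 0.5 ≤ M * α := by
    have := hMia
    rw [div_le_iff₀ (by linarith)] at this
    nlinarith
  have hMβ : 0.5 ≤ M * β := by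
    have := hMib
    rw [div_le_iff₀ (by linarith)] at this
    nlinarith
  clear_value M
  constructor
  · have key : M = 2 * α ∨ M = 2 * β ∨ M = 1 / (2 * α) ∨ M = 1 / (2 * β) := by
      rcases max_choice (max (2 * α) (2 * β)) (max (1 / (2 * α)) (1 / (2 * β))) with h | h <;>
        rw [hMdef, h]
      · rcases max_choice (2 * α) (2 * β) with h2 | h2 <;> rw [h2] <;> tauto
      · rcases max_choice (1 / (2 * α)) (1 / (2 * β)) with h2 | h2 <;> rw [h2] <;> tauto
    rcases key with h | h | h | h
    · exact ⟨1, 0, 0, by norm_num, by norm_num, by norm_num, by norm_num, by norm_num,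
        Or.inr (by rw [h]; norm_num; field_simp; try ring)⟩
    · exact ⟨0, 0, 1, by norm_num, by norm_num, by norm_num, by norm_num, by norm_num,
        Or.inr (by rw [h]; norm_num; field_simp; try ring)⟩
    · exact ⟨1, 0, 0, by norm_num, by norm_num, by norm_num, by norm_num, by norm_num,
        Or.inl (by rw [h]; norm_num; field_simp; try ring)⟩
    · exact ⟨0, 0, 1, by norm_num, by norm_num, by norm_num, by norm_num, by norm_num,
        Or.inl (by rw [h]; norm_num; field_simp; try ring)⟩
  · rintro e ⟨a, b, c, ha, hb, hc, hpos, hle, he⟩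
    have hd1 : 0 < b + 0.5 * a + 0.5 * c := by linarith
    have hd2 : 0 < b + α * a + β * c := by
      rcases ha.lt_or_eq with h | h
      · have := mul_pos hα h
        nlinarith [mul_nonneg hβ.le hc]
      · rcases hc.lt_or_eq with h2 | h2
        · have := mul_pos hβ h2
          nlinarith [mul_nonneg hα.le ha]
        · have hbpos : 0 < b := by linarith
          nlinarith [mul_nonneg hα.le ha, mul_nonneg hβ.le hc]
    have e1 : 0.5 * a ≤ M * (α * a) := by nlinarith [mul_le_mul_of_nonneg_right hMα ha]
    have e2 : 0.5 * c ≤ M * (β * c) := by nlinarith [mul_le_mul_of_nonneg_right hMβ hc]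
    have e3 : α * a ≤ M * (0.5 * a) := by nlinarith [mul_le_mul_of_nonneg_right hMa ha]
    have e4 : β * c ≤ M * (0.5 * c) := by nlinarith [mul_le_mul_of_nonneg_right hMb hc]
    have e5 : b ≤ M * b := le_mul_of_one_le_left hb hM1
    rcases he with h | h
    · rw [h, div_le_iff₀ hd2, mul_add, mul_add]
      linarith
    · rw [h, div_le_iff₀ hd1, mul_add, mul_add]
      linarith
end

section
/- The absolute approximation error between T_{α,α} and Dice, namely |(√(2α)−1)/(√(2α)+1)|, is strictly decreasing in α on (0, 1/2), equal to 0 at α = 1/2, and strictly increasing on (1/2, ∞); moreover it tends to 1 as α → 0⁺ or α → ∞. -/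
open Filter

theorem tversky_dice_error_monotonicity :
    let f : ℝ → ℝ := fun α => |(Real.sqrt (2 * α) - 1) / (Real.sqrt (2 * α) + 1)|
    StrictAntiOn f (Set.Ioc (0:ℝ) (1/2)) ∧
    f (1/2) = 0 ∧
    StrictMonoOn f (Set.Ici (1/2 : ℝ)) ∧
    Tendsto f (nhdsWithin 0 (Set.Ioi 0)) (nhds 1) ∧
    Tendsto f atTop (nhds 1) := by
  intro f
  have habs : ∀ x : ℝ, f x = |(Real.sqrt (2 * x) - 1) / (Real.sqrt (2 * x) + 1)| := fun _ => rfl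
  refine ⟨?_, ?_, ?_, ?_, ?_⟩
  · intro a ha b hb hab
    set sa := Real.sqrt (2 * a) with hsa
    set sb := Real.sqrt (2 * b) with hsb
    have hsa0 : 0 < sa := Real.sqrt_pos.mpr (by linarith [ha.1])
    have hsb1 : sb ≤ 1 := by
      rw [hsb, show (1:ℝ) = Real.sqrt 1 by simp]
      exact Real.sqrt_le_sqrt (by linarith [hb.2])
    have hlt : sa < sb := Real.sqrt_lt_sqrt (by linarith [ha.1]) (by linarith)
    have hfa : f a = (1 - sa) / (sa + 1) := by
      rw [habs, ← hsa, abs_div, abs_of_nonpos (by linarith), abs_of_pos (by linarith)]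
      ring
    have hfb : f b = (1 - sb) / (sb + 1) := by
      rw [habs, ← hsb, abs_div, abs_of_nonpos (by linarith), abs_of_pos (by linarith)]
      ring
    rw [hfa, hfb, div_lt_div_iff₀ (by linarith) (by linarith)]
    nlinarith
  · rw [habs]
    norm_num
  · intro a ha b hb hab
    set sa := Real.sqrt (2 * a) with hsa
    set sb := Real.sqrt (2 * b) with hsb
    have hsa1 : 1 ≤ sa := by
      rw [hsa, show (1:ℝ) = Real.sqrt 1 by simp]
      exact Real.sqrt_le_sqrt (by simp at ha; linarith)
    have hlt : sa < sb := Real.sqrt_lt_sqrt (by simp at ha; linarith) (by linarith)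
    have hfa : f a = (sa - 1) / (sa + 1) := by
      rw [habs, ← hsa, abs_div, abs_of_nonneg (by linarith), abs_of_pos (by linarith)]
    have hfb : f b = (sb - 1) / (sb + 1) := by
      rw [habs, ← hsb, abs_div, abs_of_nonneg (by linarith), abs_of_pos (by linarith)]
    rw [hfa, hfb, div_lt_div_iff₀ (by linarith) (by linarith)]
    nlinarith
  · have hs : Tendsto (fun α : ℝ => Real.sqrt (2 * α)) (nhdsWithin 0 (Set.Ioi 0)) (nhds 0) := by
      have : Continuous (fun α : ℝ => Real.sqrt (2 * α)) :=
        Real.continuous_sqrt.comp (continuous_const.mul continuous_id)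
      have hc : Tendsto (fun α : ℝ => Real.sqrt (2 * α)) (nhds 0) (nhds 0) := by
        simpa using this.tendsto 0
      exact hc.mono_left nhdsWithin_le_nhds
    have hq : Tendsto (fun α : ℝ => (Real.sqrt (2 * α) - 1) / (Real.sqrt (2 * α) + 1))
        (nhdsWithin 0 (Set.Ioi 0)) (nhds (-1)) := by
      have := (hs.sub_const 1).div (hs.add_const 1) (by norm_num)
      simpa [Pi.div_def] using this
    have := (continuous_abs.tendsto (-1)).comp hq
    simpa only [Function.comp_def, abs_neg, abs_one, f] using this
  · have hs : Tendsto (fun α : ℝ => Real.sqrt (2 * α)) atTop atTop :=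
      tendsto_atTop_atTop_of_monotone
        (fun x y h => Real.sqrt_le_sqrt (by linarith))
        (fun b => ⟨b ^ 2 / 2, by
          rw [mul_div_cancel₀ _ (by norm_num : (2:ℝ) ≠ 0), Real.sqrt_sq_eq_abs]
          exact le_abs_self b⟩)
    have hq : Tendsto (fun x : ℝ => (x - 1) / (x + 1)) atTop (nhds 1) := by
      have h2 : Tendsto (fun x : ℝ => 2 / (x + 1)) atTop (nhds 0) :=
        Tendsto.div_atTop tendsto_const_nhds (tendsto_atTop_add_const_right _ 1 tendsto_id)
      have := (tendsto_const_nhds : Tendsto (fun _ : ℝ => (1:ℝ)) atTop (nhds 1)).sub h2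
      rw [sub_zero] at this
      refine this.congr' ?_
      filter_upwards [eventually_gt_atTop (0 : ℝ)] with x hx
      field_simp
      ring
    have hcomp := hq.comp hs
    have := (continuous_abs.tendsto 1).comp hcomp
    simpa only [Function.comp_def, abs_one, f] using this
end
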